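/- If α̂ minimizes the penalized weighted-likelihood objective F over ℝ^{1+q₁}, then: (i) the weighted residuals vanish, (1/n)·Σ_{i=1}^n Z_i·((1−π̂_i)/π̂_i)·(D_i − m̂_i) = 0; (ii) consequently the augmented inverse-probability-weighted average simplifies, (1/n)·Σ_{i=1}^n [ m̂_i + (Z_i/π̂_i)·(D_i − m̂_i) ] = (1/n)·Σ_{i=1}^n [ Z_i·D_i + (1−Z_i)·m̂_i ]; and (iii) if in addition 0 ≤ D_i ≤ 1 and 0 ≤ m̂_i ≤ 1 for all i, then this common value lies in the interval [0, 1]. -/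

import Mathlib

open Finset

/-- KKT consequences of minimizing the penalized weighted-likelihood objective for
the treatment regression: vanishing weighted residuals, simplification of the
augmented IPW average, and boundedness in `[0,1]`. -/
theorem stmt_7 (n q1 : ℕ) (hn : 1 ≤ n) (hq1 : 1 ≤ q1)
    (Z D : Fin n → ℝ) (hZ : ∀ i, Z i = 0 ∨ Z i = 1)
    (πhat : Fin n → ℝ) (hπ : ∀ i, 0 < πhat i ∧ πhat i < 1)
    (g : Fin n → Fin (q1 + 1) → ℝ) (hg0 : ∀ i, g i 0 = 1)
    (Ψ ψ : ℝ → ℝ) (hΨ : ∀ x, HasDerivAt Ψ (ψ x) x)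
    (lam : ℝ) (hlam : 0 ≤ lam)
    (w : Fin n → ℝ) (hw : ∀ i, w i = (1 - πhat i) / πhat i)
    (F : (Fin (q1 + 1) → ℝ) → ℝ)
    (hF : ∀ α, F α = (1 / (n : ℝ)) * ∑ i, Z i * w i *
          (-(D i) * (∑ j, α j * g i j) + Ψ (∑ j, α j * g i j))
        + lam * ∑ j : Fin q1, |α j.succ|)
    (αhat : Fin (q1 + 1) → ℝ) (hmin : ∀ α, F αhat ≤ F α)
    (mhat : Fin n → ℝ) (hm : ∀ i, mhat i = ψ (∑ j, αhat j * g i j)) :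
    ((1 / (n : ℝ)) * ∑ i, Z i * ((1 - πhat i) / πhat i) * (D i - mhat i) = 0) ∧
    ((1 / (n : ℝ)) * ∑ i, (mhat i + (Z i / πhat i) * (D i - mhat i))
        = (1 / (n : ℝ)) * ∑ i, (Z i * D i + (1 - Z i) * mhat i)) ∧
    ((∀ i, 0 ≤ D i ∧ D i ≤ 1) → (∀ i, 0 ≤ mhat i ∧ mhat i ≤ 1) →
      0 ≤ (1 / (n : ℝ)) * ∑ i, (Z i * D i + (1 - Z i) * mhat i) ∧
      (1 / (n : ℝ)) * ∑ i, (Z i * D i + (1 - Z i) * mhat i) ≤ 1) := by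
  have hnR : (0:ℝ) < (n:ℝ) := by exact_mod_cast hn
  set s : Fin n → ℝ := fun i => ∑ j, αhat j * g i j with hs
  set A : ℝ → (Fin (q1+1) → ℝ) := fun t j => if j = 0 then αhat 0 + t else αhat j with hA
  have hsum : ∀ t, ∀ i, (∑ j, A t j * g i j) = s i + t := by
    intro t i
    have h1 : ∀ j : Fin (q1+1), A t j * g i j
        = αhat j * g i j + (if j = 0 then t * g i j else 0) := by
      intro j; by_cases hj : j = 0 <;> simp [hA, hj] <;> ring
    rw [Finset.sum_congr rfl (fun j _ => h1 j), Finset.sum_add_distrib,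
      Finset.sum_ite_eq' Finset.univ (0 : Fin (q1+1)) (fun j => t * g i j)]
    simp [hg0, hs]
  have hA0 : A 0 = αhat := by
    funext j; by_cases hj : j = 0 <;> simp [hA, hj]
  have hform : ∀ t, F (A t) = (1 / (n : ℝ)) * ∑ i, Z i * w i *
      (-(D i) * (s i + t) + Ψ (s i + t)) + lam * ∑ j : Fin q1, |αhat j.succ| := by
    intro t
    have hpen : ∀ j : Fin q1, A t j.succ = αhat j.succ := by
      intro j; simp [hA, Fin.succ_ne_zero]
    rw [hF (A t)]
    simp only [hsum, hpen]
  set c : ℝ := (1 / (n : ℝ)) * ∑ i, Z i * w i * (-(D i) + ψ (s i)) with hc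
  have hderiv : HasDerivAt (fun t => F (A t)) c 0 := by
    rw [funext hform]
    have hsumderiv : HasDerivAt (fun t => ∑ i, Z i * w i *
        (-(D i) * (s i + t) + Ψ (s i + t)))
        (∑ i, Z i * w i * (-(D i) + ψ (s i))) 0 := by
      apply HasDerivAt.fun_sum
      intro i _
      have hlin : HasDerivAt (fun t : ℝ => s i + t) 1 0 :=
        (hasDerivAt_id 0).const_add (s i)
      have hΨc : HasDerivAt (fun t : ℝ => Ψ (s i + t)) (ψ (s i + 0) * 1) 0 :=
        (hΨ (s i + 0)).comp 0 hlin
      have hD : HasDerivAt (fun t : ℝ => -(D i) * (s i + t)) (-(D i) * 1) 0 :=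
        hlin.const_mul (-(D i))
      have := (hD.add hΨc).const_mul (Z i * w i)
      simpa [mul_add, mul_one, add_zero] using this
    simpa [hc] using (hsumderiv.const_mul (1 / (n:ℝ))).add_const
      (lam * ∑ j : Fin q1, |αhat j.succ|)
  have hloc : IsLocalMin (fun t => F (A t)) 0 :=
    Filter.Eventually.of_forall fun t => by
      simpa [hA0] using hmin (A t)
  have hc0 : c = 0 := hloc.hasDerivAt_eq_zero hderiv
  have key : (1 / (n : ℝ)) * ∑ i, Z i * ((1 - πhat i) / πhat i) * (D i - mhat i) = 0 := by
    have h1 : ∀ i, Z i * ((1 - πhat i) / πhat i) * (D i - mhat i)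
        = -(Z i * w i * (-(D i) + ψ (s i))) := by
      intro i; rw [hw, hm]; ring
    rw [Finset.sum_congr rfl fun i _ => h1 i, Finset.sum_neg_distrib, mul_neg,
      ← hc, hc0, neg_zero]
  refine ⟨key, ?_, ?_⟩
  · have h2 : ∀ i, mhat i + (Z i / πhat i) * (D i - mhat i)
        = (Z i * D i + (1 - Z i) * mhat i)
          + Z i * ((1 - πhat i) / πhat i) * (D i - mhat i) := by
      intro i
      have hne : πhat i ≠ 0 := (hπ i).1.ne'
      field_simp
      ring
    rw [Finset.sum_congr rfl fun i _ => h2 i, Finset.sum_add_distrib, mul_add, key,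
      add_zero]
  · intro hD hmb
    have hterm : ∀ i, 0 ≤ Z i * D i + (1 - Z i) * mhat i ∧
        Z i * D i + (1 - Z i) * mhat i ≤ 1 := by
      intro i
      rcases hZ i with h | h <;> rw [h] <;> simp <;>
        first
        | exact hmb i
        | exact hD i
    constructor
    · apply mul_nonneg (by positivity)
      exact Finset.sum_nonneg fun i _ => (hterm i).1
    · have hsle : ∑ i, (Z i * D i + (1 - Z i) * mhat i) ≤ (n:ℝ) := by
        calc ∑ i, (Z i * D i + (1 - Z i) * mhat i) ≤ ∑ _i : Fin n, (1:ℝ) :=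
          Finset.sum_le_sum fun i _ => (hterm i).2
        _ = (n:ℝ) := by simp
      calc (1 / (n : ℝ)) * ∑ i, (Z i * D i + (1 - Z i) * mhat i)
          ≤ (1 / (n:ℝ)) * (n:ℝ) := by
            apply mul_le_mul_of_nonneg_left hsle (by positivity)
        _ = 1 := by field_simp
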